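/- Let E be a topological space, X a Banach space over 𝕂, U ⊆ X nonempty and open, 𝔞₁ : E → S(V × W, 𝕂) and 𝔠 : E × U → S(H × W, 𝕂) continuous, each 𝔞₁(t) satisfying the inf-sup condition with constant c(t) > 0 and nondegenerate in the second component, and assume the embedding j : V → H is a compact operator. Let Ũ ⊆ U be nonempty and suppose that for all (t,m) ∈ E × Ũ and u ∈ V: if 𝔞₁(t)(u,w) + 𝔠(t,m)(ju,w) = 0 for all w ∈ W, then u = 0. Then: (a) there exists a set 𝒰 ⊆ E × U, open in E × X, containing E × Ũ, such that I_V + C^V_{t,m} is invertible in L(V) for all (t,m) ∈ 𝒰 and (t,m) ↦ (I_V + C^V_{t,m})⁻¹ is continuous on 𝒰; moreover for each t ∈ E there is a set 𝒰_t, open in X, with Ũ ⊆ 𝒰_t ⊆ U, such that I_V + C^V_{t,m} is invertible for all m ∈ 𝒰_t. (b) For every φ ∈ W* and (t,m) ∈ 𝒰 there exists exactly one u ∈ V with 𝔞₁(t)(u,w) + 𝔠(t,m)(ju,w) = φ(w) for all w ∈ W; this u depends continuously on (t,m,φ) and satisfies ‖u‖_V ≤ (1/c(t))·‖(I_V + C^V_{t,m})⁻¹‖_{L(V)}·‖φ‖_{W*}.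 -/

import Mathlib

open Metric Set
open scoped NNReal

section Aux

variable {𝕂 V W : Type*} [RCLike 𝕂]
  [NormedAddCommGroup V] [NormedSpace 𝕂 V] [CompleteSpace V]
  [NormedAddCommGroup W] [NormedSpace 𝕂 W]



/-- Image of a closed submodule under a bounded-below CLM is closed. -/
lemma aux_image_closed (S : V →L[𝕂] V) {κ : ℝ≥0}
    (hb : ∀ v, ‖v‖ ≤ κ * ‖S v‖) (M : Submodule 𝕂 V) (hM : IsClosed (M : Set V)) :
    IsClosed (⇑S '' (M : Set V)) := by
  haveI : CompleteSpace M := hM.completeSpace_coe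
  have hanti : AntilipschitzWith κ ⇑S := S.antilipschitz_of_bound hb
  have h1 : AntilipschitzWith (1 * κ) (⇑S ∘ (Subtype.val : M → V)) :=
    hanti.comp (AntilipschitzWith.subtype_coe _)
  have h2 : UniformContinuous (⇑S ∘ (Subtype.val : M → V)) :=
    S.uniformContinuous.comp uniformContinuous_subtype_val
  have h3 := h1.isClosed_range h2
  have : range (⇑S ∘ (Subtype.val : M → V)) = ⇑S '' (M : Set V) := by
    rw [Set.range_comp, Subtype.range_coe]
  rwa [this] at h3

/-- Fredholm alternative: if `T` is compact and `1 + T` is injective, then it is bijective. -/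
lemma fredholm_alternative (T : V →L[𝕂] V) (hT : IsCompactOperator ⇑T)
    (hi : Function.Injective ⇑(1 + T)) : Function.Bijective ⇑(1 + T) := by
  set S : V →L[𝕂] V := 1 + T with hS
  have hSapp : ∀ v, S v = v + T v := fun v => rfl
  refine ⟨hi, ?_⟩
  -- compact set containing image of the unit ball under T
  obtain ⟨K, hK, hTK⟩ : ∃ K : Set V, IsCompact K ∧ ⇑T '' closedBall 0 1 ⊆ K :=
    IsCompactOperator.image_closedBall_subset_compact (f := T.toLinearMap) hT 1
  -- Step 1: S is bounded below
  obtain ⟨κ, hκpos, hκ⟩ : ∃ κ : ℝ, 0 < κ ∧ ∀ v, κ * ‖v‖ ≤ ‖S v‖ := by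
    by_contra hcon
    push_neg at hcon
    have key : ∀ n : ℕ, ∃ u : V, ‖u‖ = 1 ∧ ‖S u‖ < 1 / (n + 1) := by
      intro n
      obtain ⟨v, hv⟩ := hcon (1 / (n + 1)) (by positivity)
      have hvne : v ≠ 0 := by
        rintro rfl; simp at hv
      have h2 : (0:ℝ) < ‖v‖ := norm_pos_iff.2 hvne
      refine ⟨((‖v‖⁻¹ : ℝ) : 𝕂) • v, ?_, ?_⟩
      · simp [norm_smul, inv_mul_cancel₀ (norm_ne_zero_iff.2 hvne)]
      · rw [map_smul, norm_smul]
        calc ‖((‖v‖⁻¹ : ℝ) : 𝕂)‖ * ‖S v‖ = ‖v‖⁻¹ * ‖S v‖ := by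
              simp [abs_of_pos (inv_pos.2 h2)]
        _ < ‖v‖⁻¹ * (1/(n+1) * ‖v‖) := mul_lt_mul_of_pos_left hv (by positivity)
        _ = 1 / (n+1) := by field_simp
    choose u hu1 hu2 using key
    have humem : ∀ n, T (u n) ∈ K := fun n =>
      hTK ⟨u n, by simp [hu1 n], rfl⟩
    obtain ⟨y, -, φ, hφ, hy⟩ := hK.tendsto_subseq humem
    have hSu : Filter.Tendsto (fun k => S (u (φ k))) Filter.atTop (nhds 0) := by
      apply squeeze_zero_norm (fun k => (hu2 (φ k)).le.trans ?_)
        tendsto_one_div_add_atTop_nhds_zero_nat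
      gcongr
      exact_mod_cast hφ.le_apply
    have huy : Filter.Tendsto (fun k => u (φ k)) Filter.atTop (nhds (-y)) := by
      have heq : ∀ k, u (φ k) = S (u (φ k)) - T (u (φ k)) := by
        intro k; rw [hSapp]; abel
      have h0 := hSu.sub hy
      rw [zero_sub] at h0
      exact h0.congr (fun k => (heq k).symm)
    have hny : ‖(-y : V)‖ = 1 := by
      have h := (continuous_norm.tendsto (-y)).comp huy
      simp only [Function.comp_def, hu1] at h
      exact (tendsto_nhds_unique tendsto_const_nhds h).symm
    have hSy : S (-y) = 0 := by
      have h := (S.continuous.tendsto (-y)).comp huy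
      simp only [Function.comp_def] at h
      exact tendsto_nhds_unique h hSu
    have : (-y : V) = 0 := hi (by simpa using hSy)
    rw [this] at hny; simp at hny
  -- antilipschitz form
  have hbelow : ∀ v, ‖v‖ ≤ (⟨κ⁻¹, by positivity⟩ : ℝ≥0) * ‖S v‖ := by
    intro v
    have : ((⟨κ⁻¹, by positivity⟩ : ℝ≥0) : ℝ) = κ⁻¹ := rfl
    rw [this, inv_mul_eq_div, le_div_iff₀ hκpos, mul_comm]
    exact hκ v
  -- Step 2: suppose not surjective
  by_contra hsur
  rw [Function.Surjective] at hsur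
  push_neg at hsur
  obtain ⟨x₀, hx₀⟩ := hsur
  have hTapp : ∀ v, T v = S v - v := fun v => by rw [hSapp]; abel
  -- decreasing chain of closed subspaces
  set R : ℕ → Submodule 𝕂 V := fun n => (fun M => Submodule.map (S : V →ₗ[𝕂] V) M)^[n] ⊤ with hR
  have hRsucc : ∀ n, R (n+1) = Submodule.map (S : V →ₗ[𝕂] V) (R n) := fun n =>
    Function.iterate_succ_apply' _ _ _
  have hclosed : ∀ n, IsClosed (R n : Set V) := by
    intro n
    induction n with
    | zero =>
      show IsClosed ((⊤ : Submodule 𝕂 V) : Set V)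
      rw [Submodule.top_coe]; exact isClosed_univ
    | succ n ih =>
      rw [hRsucc]
      have : ((Submodule.map (S : V →ₗ[𝕂] V) (R n) : Submodule 𝕂 V) : Set V) = ⇑S '' (R n : Set V) :=
        Submodule.map_coe _ _
      rw [this]
      exact aux_image_closed S hbelow (R n) ih
  have hmono : ∀ n, R (n+1) ≤ R n := by
    intro n
    induction n with
    | zero => exact le_top
    | succ n ih =>
      calc R (n+2) = Submodule.map (S : V →ₗ[𝕂] V) (R (n+1)) := hRsucc _
      _ ≤ Submodule.map (S : V →ₗ[𝕂] V) (R n) := Submodule.map_mono ih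
      _ = R (n+1) := (hRsucc n).symm
  have hanti : Antitone R := antitone_nat_of_succ_le hmono
  -- the sequence z n = S^[n] x₀
  set z : ℕ → V := fun n => (⇑S)^[n] x₀ with hz
  have hzsucc : ∀ n, z (n+1) = S (z n) := fun n => Function.iterate_succ_apply' _ _ _
  have hzmem : ∀ n, z n ∈ R n := by
    intro n
    induction n with
    | zero => exact Submodule.mem_top
    | succ n ih =>
      rw [hzsucc, hRsucc]
      exact Submodule.mem_map_of_mem ih
  have hznot : ∀ n, z n ∉ R (n+1) := by
    intro n
    induction n with
    | zero =>
      intro hmem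
      rw [hRsucc] at hmem
      obtain ⟨y, -, hy⟩ := hmem
      exact hx₀ y hy
    | succ n ih =>
      intro hmem
      rw [hRsucc (n+1)] at hmem
      obtain ⟨y, hy, hSy⟩ := hmem
      rw [hzsucc] at hSy
      exact ih ((hi hSy) ▸ hy)
  -- Riesz sequence
  have hriesz : ∀ n, ∃ e : V, e ∈ R n ∧ ‖e‖ = 1 ∧ ∀ u ∈ R (n+1), 1/2 ≤ ‖e - u‖ := by
    intro n
    set d := Metric.infDist (z n) (R (n+1) : Set V) with hd
    have hRne : (R (n+1) : Set V).Nonempty := ⟨0, (R (n+1)).zero_mem⟩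
    have hdpos : 0 < d := ((hclosed (n+1)).notMem_iff_infDist_pos hRne).1 (hznot n)
    obtain ⟨y, hy, hdy⟩ : ∃ y ∈ (R (n+1) : Set V), dist (z n) y < 2 * d :=
      (Metric.infDist_lt_iff hRne).1 (by linarith)
    have hsubne : z n - y ≠ 0 := by
      intro h0
      apply hznot n
      have : z n = y := by rwa [sub_eq_zero] at h0
      rwa [this]
    set r : ℝ := ‖z n - y‖ with hr
    have hrpos : 0 < r := norm_pos_iff.2 hsubne
    have hrd : r < 2 * d := by rwa [hr, ← dist_eq_norm]
    refine ⟨((r⁻¹ : ℝ) : 𝕂) • (z n - y), ?_, ?_, ?_⟩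
    · exact Submodule.smul_mem _ _ (Submodule.sub_mem _ (hzmem n) (hmono n hy))
    · rw [norm_smul]
      simp [hr, abs_of_pos (inv_pos.2 hrpos), inv_mul_cancel₀ hrpos.ne', inv_mul_cancel₀ (norm_ne_zero_iff.2 hsubne)]
    · intro u hu
      have hru : ((r⁻¹ : ℝ) : 𝕂) • (((r : ℝ) : 𝕂) • u) = u := by
        rw [smul_smul, ← RCLike.ofReal_mul, inv_mul_cancel₀ hrpos.ne', RCLike.ofReal_one, one_smul]
      have hkey : ((r⁻¹ : ℝ) : 𝕂) • (z n - y) - u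
          = ((r⁻¹ : ℝ) : 𝕂) • (z n - (y + ((r : ℝ) : 𝕂) • u)) := by
        rw [smul_sub, smul_sub, smul_add, hru]
        abel
      rw [hkey, norm_smul]
      have hmem' : y + ((r : ℝ) : 𝕂) • u ∈ R (n+1) :=
        Submodule.add_mem _ hy (Submodule.smul_mem _ _ hu)
      have hge : d ≤ ‖z n - (y + ((r : ℝ) : 𝕂) • u)‖ := by
        rw [← dist_eq_norm]
        exact Metric.infDist_le_dist_of_mem hmem'
      have : ‖((r⁻¹ : ℝ) : 𝕂)‖ = r⁻¹ := by
        rw [RCLike.norm_ofReal, abs_of_pos (inv_pos.2 hrpos)]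
      rw [this]
      calc (1:ℝ)/2 ≤ r⁻¹ * d := by
            rw [inv_mul_eq_div, le_div_iff₀ hrpos]
            linarith
      _ ≤ r⁻¹ * ‖z n - (y + ((r : ℝ) : 𝕂) • u)‖ :=
            mul_le_mul_of_nonneg_left hge (inv_nonneg.2 hrpos.le)
  choose e hmem hnorm hsep using hriesz
  -- separation of the images T (e n)
  have hTsep : ∀ k l, k < l → 1/2 ≤ ‖T (e k) - T (e l)‖ := by
    intro k l hkl
    have hu : S (e k) - S (e l) + e l ∈ R (k+1) := by
      refine Submodule.add_mem _ (Submodule.sub_mem _ ?_ ?_) ?_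
      · rw [hRsucc]; exact Submodule.mem_map_of_mem (hmem k)
      · exact hanti (by omega : k + 1 ≤ l + 1) (by rw [hRsucc]; exact Submodule.mem_map_of_mem (hmem l))
      · exact hanti (by omega : k + 1 ≤ l) (hmem l)
    have hkey : T (e k) - T (e l) = -(e k - (S (e k) - S (e l) + e l)) := by
      rw [hTapp, hTapp]; abel
    rw [hkey, norm_neg]
    exact hsep k _ hu
  have hTe : ∀ n, T (e n) ∈ K := fun n =>
    hTK ⟨e n, by simp [Metric.mem_closedBall, hnorm n], rfl⟩
  obtain ⟨p, -, φ, hφ, hconv⟩ := hK.tendsto_subseq hTe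
  obtain ⟨N, hN⟩ := Metric.tendsto_atTop.1 hconv (1/4) (by norm_num)
  have h1 := hN N le_rfl
  have h2 := hN (N+1) (by omega)
  have hlt : φ N < φ (N+1) := hφ (by omega)
  have := hTsep (φ N) (φ (N+1)) hlt
  rw [← dist_eq_norm] at this
  have : dist (T (e (φ N))) (T (e (φ (N+1)))) < 1/2 := by
    calc dist (T (e (φ N))) (T (e (φ (N+1))))
        ≤ dist (T (e (φ N))) p + dist p (T (e (φ (N+1)))) := dist_triangle _ _ _
    _ < 1/4 + 1/4 := by
        rw [dist_comm p]
        exact add_lt_add h1 h2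
    _ = 1/2 := by norm_num
  linarith [hTsep (φ N) (φ (N+1)) hlt, dist_eq_norm (T (e (φ N))) (T (e (φ (N+1))))]



/-- Conjugation: from the dual to the anti-dual. -/
noncomputable def conjAD (f : W →L[𝕂] 𝕂) : W →SL[starRingEnd 𝕂] 𝕂 :=
  LinearMap.mkContinuous
    { toFun := fun x => starRingEnd 𝕂 (f x)
      map_add' := fun x y => by simp
      map_smul' := fun a x => by simp [mul_comm] } ‖f‖
    (fun x => by simpa using f.le_opNorm x)

@[simp] lemma conjAD_apply (f : W →L[𝕂] 𝕂) (x : W) :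
    conjAD f x = starRingEnd 𝕂 (f x) := rfl

/-- Conjugation: from the anti-dual to the dual. -/
noncomputable def conjDA (φ : W →SL[starRingEnd 𝕂] 𝕂) : W →L[𝕂] 𝕂 :=
  LinearMap.mkContinuous
    { toFun := fun x => starRingEnd 𝕂 (φ x)
      map_add' := fun x y => by simp
      map_smul' := fun a x => by simp [mul_comm] } ‖φ‖
    (fun x => by simpa using φ.le_opNorm x)

@[simp] lemma conjDA_apply (φ : W →SL[starRingEnd 𝕂] 𝕂) (x : W) :
    conjDA φ x = starRingEnd 𝕂 (φ x) := rfl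

/-- Reflexivity: every continuous linear functional on the anti-dual is evaluation. -/
lemma represent_antidual
    (hrefl : Function.Surjective ⇑(NormedSpace.inclusionInDoubleDual 𝕂 W))
    (ψ : (W →SL[starRingEnd 𝕂] 𝕂) →L[𝕂] 𝕂) : ∃ w : W, ∀ φ, ψ φ = φ w := by
  classical
  let Ψlin : StrongDual 𝕂 W →ₗ[𝕂] 𝕂 :=
    { toFun := fun f => starRingEnd 𝕂 (ψ (conjAD f))
      map_add' := fun f g => by
        have h : conjAD (𝕂 := 𝕂) (f + g) = conjAD f + conjAD g := by
          ext x; simp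
        show starRingEnd 𝕂 (ψ (conjAD (f + g))) = _
        rw [h, map_add, map_add]
      map_smul' := fun a f => by
        have h : conjAD (𝕂 := 𝕂) (a • f) = (starRingEnd 𝕂 a) • conjAD f := by
          ext x; simp [mul_comm]
        show starRingEnd 𝕂 (ψ (conjAD (a • f))) = RingHom.id 𝕂 a • starRingEnd 𝕂 (ψ (conjAD f))
        rw [h, map_smul]
        simp [smul_eq_mul] }
  let Ψ : StrongDual 𝕂 (StrongDual 𝕂 W) := Ψlin.mkContinuous ‖ψ‖ (by
    intro f
    have h1 : ‖Ψlin f‖ = ‖ψ (conjAD f)‖ := by simp [Ψlin]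
    have h2 : ‖ψ (conjAD f)‖ ≤ ‖ψ‖ * ‖conjAD f‖ := ψ.le_opNorm _
    have h3 : ‖conjAD (𝕂 := 𝕂) f‖ ≤ ‖f‖ :=
      LinearMap.mkContinuous_norm_le _ (norm_nonneg f) _
    calc ‖Ψlin f‖ ≤ ‖ψ‖ * ‖conjAD (𝕂 := 𝕂) f‖ := by rw [h1]; exact h2
    _ ≤ ‖ψ‖ * ‖f‖ := mul_le_mul_of_nonneg_left h3 (norm_nonneg ψ))
  obtain ⟨w, hw⟩ := hrefl Ψ
  refine ⟨w, fun φ => ?_⟩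
  have h1 : Ψ (conjDA φ) = conjDA φ w := by
    rw [← hw]; exact NormedSpace.dual_def 𝕂 W w (conjDA φ)
  have h2 : conjAD (𝕂 := 𝕂) (conjDA φ) = φ := by ext x; simp
  have h3 : Ψ (conjDA φ) = starRingEnd 𝕂 (ψ φ) := by
    show Ψlin (conjDA φ) = _
    simp [Ψlin, h2]
  have h4 : starRingEnd 𝕂 (ψ φ) = starRingEnd 𝕂 (φ w) := by
    rw [← h3, h1]; simp
  have := congrArg (starRingEnd 𝕂) h4
  simpa using this

/-- A closed proper subspace admits a separating functional. -/
lemma exists_functional_vanishing {Y : Type*} [NormedAddCommGroup Y] [NormedSpace 𝕂 Y]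
    (p : Submodule 𝕂 Y) (hp : IsClosed (p : Set Y)) {x : Y} (hx : x ∉ p) :
    ∃ ψ : Y →L[𝕂] 𝕂, ψ x ≠ 0 ∧ ∀ y ∈ p, ψ y = 0 := by
  haveI : IsClosed (p : Set Y) := hp
  let q : Y →L[𝕂] Y ⧸ p :=
    LinearMap.mkContinuous p.mkQ 1
      (fun y => by simpa using Submodule.Quotient.norm_mk_le p y)
  have hxq : (Submodule.Quotient.mk x : Y ⧸ p) ≠ 0 := by
    simpa [Submodule.Quotient.mk_eq_zero] using hx
  obtain ⟨f, hf⟩ := SeparatingDual.exists_ne_zero (R := 𝕂) hxq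
  refine ⟨f.comp q, hf, fun y hy => ?_⟩
  have hq : q y = (0 : Y ⧸ p) := (Submodule.Quotient.mk_eq_zero p).2 hy
  simp [ContinuousLinearMap.comp_apply, hq]

/-- Banach–Nečas–Babuška: inf-sup + nondegeneracy + reflexivity give bijectivity. -/
lemma bnb {V : Type*} [NormedAddCommGroup V] [NormedSpace 𝕂 V] [CompleteSpace V]
    (hrefl : Function.Surjective ⇑(NormedSpace.inclusionInDoubleDual 𝕂 W))
    (A : V →L[𝕂] (W →SL[starRingEnd 𝕂] 𝕂)) {c : ℝ} (hc : 0 < c)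
    (hlow : ∀ v, c * ‖v‖ ≤ ‖A v‖)
    (hnd : ∀ w : W, (∀ v, A v w = 0) → w = 0) :
    Function.Bijective ⇑A := by
  have hinj : Function.Injective ⇑A := by
    intro a b hab
    have h0 : A (a - b) = 0 := by rw [map_sub, hab, sub_self]
    have := hlow (a - b)
    rw [h0, norm_zero] at this
    have : ‖a - b‖ ≤ 0 := by
      by_contra h
      push_neg at h
      nlinarith
    rw [← sub_eq_zero]
    exact norm_le_zero_iff.1 this
  refine ⟨hinj, ?_⟩
  intro φ
  by_contra hφ
  set K : ℝ≥0 := ⟨c⁻¹, inv_nonneg.2 hc.le⟩ with hK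
  have hbound : ∀ v, ‖v‖ ≤ K * ‖A v‖ := by
    intro v
    have h : (K : ℝ) = c⁻¹ := rfl
    rw [h, inv_mul_eq_div, le_div_iff₀ hc, mul_comm]
    exact hlow v
  have hclosed : IsClosed ((LinearMap.range (A : V →ₗ[𝕂] (W →SL[starRingEnd 𝕂] 𝕂)) : Submodule 𝕂 (W →SL[starRingEnd 𝕂] 𝕂)) : Set (W →SL[starRingEnd 𝕂] 𝕂)) := by
    have h := (A.antilipschitz_of_bound hbound).isClosed_range A.uniformContinuous
    rwa [LinearMap.coe_range]
  have hx : φ ∉ LinearMap.range (A : V →ₗ[𝕂] (W →SL[starRingEnd 𝕂] 𝕂)) := by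
    intro hmem
    obtain ⟨v, hv⟩ := LinearMap.mem_range.1 hmem
    exact hφ ⟨v, hv⟩
  obtain ⟨ψ, hψx, hψ0⟩ := exists_functional_vanishing _ hclosed hx
  obtain ⟨w, hw⟩ := represent_antidual hrefl ψ
  have hw0 : w = 0 := by
    refine hnd w (fun v => ?_)
    have h := hψ0 (A v) (LinearMap.mem_range.2 ⟨v, rfl⟩)
    rwa [hw] at h
  apply hψx
  rw [hw, hw0, map_zero]

end Aux

/-- Theorem 4.1 (global version): under the injectivity condition on `E × U'` and
compactness of the embedding `j`, there is a set `𝒰` open in `E × X` containing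
`E × U'` on which `I_V + C^V_{t,m}` is invertible with continuously varying inverse;
for each `t` there is an open `𝒰_t ⊆ X` with `U' ⊆ 𝒰_t ⊆ U` of invertibility;
and for all `(t,m) ∈ 𝒰` and `φ ∈ W*` the variational problem has a unique solution,
depending continuously on `(t,m,φ)` and satisfying the stated norm bound. -/
theorem global_well_posedness
    {𝕂 V W H X E : Type*} [RCLike 𝕂] [TopologicalSpace E]
    [NormedAddCommGroup V] [NormedSpace 𝕂 V] [CompleteSpace V]
    [NormedAddCommGroup W] [NormedSpace 𝕂 W] [CompleteSpace W] [Nontrivial W]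
    [NormedAddCommGroup H] [NormedSpace 𝕂 H] [CompleteSpace H]
    [NormedAddCommGroup X] [NormedSpace 𝕂 X] [CompleteSpace X]
    (hrefl : Function.Surjective ⇑(NormedSpace.inclusionInDoubleDual 𝕂 W))
    (j : V →L[𝕂] H) (hj : Function.Injective ⇑j) (hjcompact : IsCompactOperator ⇑j)
    (U : Set X) (hUopen : IsOpen U) (hUne : U.Nonempty)
    (𝔞₁ : E → (V →L[𝕂] (W →SL[starRingEnd 𝕂] 𝕂))) (h𝔞₁ : Continuous 𝔞₁)
    (𝔠 : E × X → (H →L[𝕂] (W →SL[starRingEnd 𝕂] 𝕂)))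
    (h𝔠 : ContinuousOn 𝔠 (Set.univ ×ˢ U))
    (c : E → ℝ) (hc : ∀ t, 0 < c t)
    (hinfsup : ∀ (t : E) (v : V), c t * ‖v‖ ≤ ‖𝔞₁ t v‖)
    (hnondeg : ∀ (t : E) (w : W), (∀ v : V, 𝔞₁ t v w = 0) → w = 0)
    (Ct : E → X → (H →L[𝕂] V))
    (hCt : ∀ (t : E), ∀ m ∈ U, ∀ (x : H) (w : W),
      𝔞₁ t ((Ct t m) x) w = 𝔠 (t, m) x w)
    (U' : Set X) (hU'ne : U'.Nonempty) (hU'U : U' ⊆ U)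
    (hinj : ∀ (t : E), ∀ m ∈ U', ∀ u : V,
      (∀ w : W, 𝔞₁ t u w + 𝔠 (t, m) (j u) w = 0) → u = 0) :
    ∃ 𝒰 : Set (E × X), IsOpen 𝒰 ∧ 𝒰 ⊆ Set.univ ×ˢ U ∧ Set.univ ×ˢ U' ⊆ 𝒰 ∧
      ∃ Binv : E × X → (V →L[𝕂] V),
        ContinuousOn Binv 𝒰 ∧
        (∀ p ∈ 𝒰, (∀ v : V, Binv p (v + Ct p.1 p.2 (j v)) = v) ∧
                   (∀ v : V, Binv p v + Ct p.1 p.2 (j (Binv p v)) = v)) ∧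
        (∀ t : E, ∃ 𝒰t : Set X, IsOpen 𝒰t ∧ U' ⊆ 𝒰t ∧ 𝒰t ⊆ U ∧
            ∀ m ∈ 𝒰t, Function.Bijective fun v : V => v + Ct t m (j v)) ∧
        ∃ sol : (E × X) × (W →SL[starRingEnd 𝕂] 𝕂) → V,
          ContinuousOn sol (𝒰 ×ˢ Set.univ) ∧
          ∀ p ∈ 𝒰, ∀ φ : W →SL[starRingEnd 𝕂] 𝕂,
            (∀ w : W, 𝔞₁ p.1 (sol (p, φ)) w + 𝔠 p (j (sol (p, φ))) w = φ w) ∧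
            (∀ u : V, (∀ w : W, 𝔞₁ p.1 u w + 𝔠 p (j u) w = φ w) → u = sol (p, φ)) ∧
            ‖sol (p, φ)‖ ≤ (1 / c p.1) * ‖Binv p‖ * ‖φ‖ := by
  classical
  have hbij : ∀ t, Function.Bijective ⇑(𝔞₁ t) := fun t =>
    bnb hrefl (𝔞₁ t) (hc t) (hinfsup t) (hnondeg t)
  let eA : ∀ t : E, V ≃L[𝕂] (W →SL[starRingEnd 𝕂] 𝕂) := fun t =>
    ContinuousLinearEquiv.ofBijective (𝔞₁ t)
      (LinearMap.ker_eq_bot.2 (hbij t).1) (LinearMap.range_eq_top.2 (hbij t).2)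
  let invA : E → ((W →SL[starRingEnd 𝕂] 𝕂) →L[𝕂] V) := fun t => ((eA t).symm : _ →L[𝕂] V)
  have hinvA_left : ∀ t v, invA t (𝔞₁ t v) = v := fun t v =>
    ContinuousLinearEquiv.ofBijective_symm_apply_apply _ _ _ v
  have hinvA_right : ∀ t φ, 𝔞₁ t (invA t φ) = φ := fun t φ =>
    ContinuousLinearEquiv.ofBijective_apply_symm_apply _ _ _ φ
  have hinvA_norm : ∀ t φ, ‖invA t φ‖ ≤ (c t)⁻¹ * ‖φ‖ := by
    intro t φ
    have h := hinfsup t (invA t φ)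
    rw [hinvA_right] at h
    rw [inv_mul_eq_div, le_div_iff₀ (hc t), mul_comm]
    exact h
  -- continuity of the inverse family
  have hinvA_cont : Continuous invA := by
    rw [continuous_iff_continuousAt]
    intro t₀
    have hunit : ∀ t, IsUnit ((invA t₀).comp (𝔞₁ t)) := by
      intro t
      rw [ContinuousLinearMap.isUnit_iff_bijective]
      exact ((eA t₀).symm.bijective).comp (hbij t)
    have hfor : ∀ t, invA t = (Ring.inverse ((invA t₀).comp (𝔞₁ t))).comp (invA t₀) := by
      intro t
      ext φ
      symm
      calc (Ring.inverse ((invA t₀).comp (𝔞₁ t))).comp (invA t₀) φ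
          = Ring.inverse ((invA t₀).comp (𝔞₁ t)) (invA t₀ (𝔞₁ t (invA t φ))) := by
            rw [hinvA_right]; rfl
      _ = (Ring.inverse ((invA t₀).comp (𝔞₁ t)) * ((invA t₀).comp (𝔞₁ t))) (invA t φ) := rfl
      _ = invA t φ := by rw [Ring.inverse_mul_cancel _ (hunit t)]; rfl
    have heq : invA = fun t => (Ring.inverse ((invA t₀).comp (𝔞₁ t))).comp (invA t₀) :=
      funext hfor
    rw [heq]
    have hG : Continuous (fun t => (invA t₀).comp (𝔞₁ t)) :=
      continuous_const.clm_comp h𝔞₁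
    have hRinv : ContinuousAt Ring.inverse ((invA t₀).comp (𝔞₁ t₀)) := by
      have h := NormedRing.inverse_continuousAt (hunit t₀).unit
      rwa [IsUnit.unit_spec] at h
    have hpost : Continuous (fun A : V →L[𝕂] V => A.comp (invA t₀)) :=
      Continuous.clm_comp continuous_id continuous_const
    have hcomp : ContinuousAt (fun t => Ring.inverse ((invA t₀).comp (𝔞₁ t))) t₀ :=
      ContinuousAt.comp (f := fun t => (invA t₀).comp (𝔞₁ t)) hRinv hG.continuousAt
    have hfin : ContinuousAt (fun t => (Ring.inverse ((invA t₀).comp (𝔞₁ t))).comp (invA t₀)) t₀ :=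
      hpost.continuousAt.comp hcomp
    exact hfin
  -- the operator family B p = 1 + C^V
  set B : E × X → (V →L[𝕂] V) := fun p => 1 + (Ct p.1 p.2).comp j with hBdef
  have hBapp : ∀ p v, B p v = v + Ct p.1 p.2 (j v) := fun p v => rfl
  have hCtEq : ∀ t : E, ∀ m ∈ U, Ct t m = (invA t).comp (𝔠 (t, m)) := by
    intro t m hm
    ext x
    show Ct t m x = invA t (𝔠 (t, m) x)
    have h : 𝔞₁ t (Ct t m x) = 𝔠 (t, m) x := by
      ext w; exact hCt t m hm x w
    rw [← h, hinvA_left]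
  have hOopen : IsOpen (Set.univ ×ˢ U : Set (E × X)) := isOpen_univ.prod hUopen
  have hBcont : ContinuousOn B (Set.univ ×ˢ U) := by
    have h1 : ContinuousOn (fun p : E × X => (((invA p.1).comp (𝔠 p)).comp j)) (Set.univ ×ˢ U) := by
      apply ContinuousOn.clm_comp
      · exact ContinuousOn.clm_comp ((hinvA_cont.comp continuous_fst).continuousOn) h𝔠
      · exact continuousOn_const
    have h2 : ContinuousOn (fun p : E × X => (Ct p.1 p.2).comp j) (Set.univ ×ˢ U) := by
      refine h1.congr ?_
      intro p hp
      show (Ct p.1 p.2).comp j = ((invA p.1).comp (𝔠 p)).comp j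
      rw [hCtEq p.1 p.2 hp.2, Prod.mk.eta]
    exact continuousOn_const.add h2
  -- the open set 𝒰
  refine ⟨(Set.univ ×ˢ U) ∩ B ⁻¹' {A | IsUnit A}, ?_, inter_subset_left, ?_, ?_⟩
  · exact hBcont.isOpen_inter_preimage hOopen Units.isOpen
  · -- univ ×ˢ U' ⊆ 𝒰
    rintro ⟨t, m⟩ ⟨-, hm⟩
    refine ⟨⟨trivial, hU'U hm⟩, ?_⟩
    show IsUnit (B (t, m))
    rw [hBdef, ContinuousLinearMap.isUnit_iff_bijective]
    apply fredholm_alternative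
    · exact hjcompact.continuous_comp (Ct t m).continuous
    · -- injectivity
      intro a b hab
      have h0 : (1 + (Ct t m).comp j) (a - b) = 0 := by
        rw [map_sub]
        rw [show (1 + (Ct t m).comp j) a = (1 + (Ct t m).comp j) b from hab, sub_self]
      have hu : (a - b) + Ct t m (j (a - b)) = 0 := h0
      have hz : a - b = 0 := by
        refine hinj t m hm (a - b) (fun w => ?_)
        have h1 : 𝔞₁ t ((a - b) + Ct t m (j (a - b))) w = 0 := by rw [hu]; simp
        rw [map_add, ContinuousLinearMap.add_apply, hCt t m (hU'U hm)] at h1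
        exact h1
      rw [← sub_eq_zero]
      exact hz
  -- the inverse family
  have hunit𝒰 : ∀ p ∈ (Set.univ ×ˢ U) ∩ B ⁻¹' {A | IsUnit A}, IsUnit (B p) := fun p hp => hp.2
  refine ⟨fun p => Ring.inverse (B p), ?_, ?_, ?_, ?_⟩
  · -- continuity of Binv
    intro p hp
    have hat : ContinuousAt B p := hBcont.continuousAt (hOopen.mem_nhds hp.1)
    have hRinv : ContinuousAt Ring.inverse (B p) := by
      have h := NormedRing.inverse_continuousAt (hunit𝒰 p hp).unit
      rwa [IsUnit.unit_spec] at h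
    exact (hRinv.comp hat).continuousWithinAt
  · -- two-sided inverse identities
    intro p hp
    constructor
    · intro v
      calc Ring.inverse (B p) (v + Ct p.1 p.2 (j v))
          = (Ring.inverse (B p) * B p) v := rfl
      _ = v := by rw [Ring.inverse_mul_cancel _ (hunit𝒰 p hp)]; rfl
    · intro v
      calc Ring.inverse (B p) v + Ct p.1 p.2 (j (Ring.inverse (B p) v))
          = (B p * Ring.inverse (B p)) v := rfl
      _ = v := by rw [Ring.mul_inverse_cancel _ (hunit𝒰 p hp)]; rfl
  · -- the slices 𝒰t
    intro t
    refine ⟨{m | (t, m) ∈ (Set.univ ×ˢ U) ∩ B ⁻¹' {A | IsUnit A}}, ?_, ?_, ?_, ?_⟩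
    · exact IsOpen.preimage (Continuous.prodMk_right t)
        (hBcont.isOpen_inter_preimage hOopen Units.isOpen)
    · intro m hm
      exact ⟨⟨trivial, hU'U hm⟩, by
        show IsUnit (B (t, m))
        rw [hBdef, ContinuousLinearMap.isUnit_iff_bijective]
        apply fredholm_alternative
        · exact hjcompact.continuous_comp (Ct t m).continuous
        · intro a b hab
          have h0 : (1 + (Ct t m).comp j) (a - b) = 0 := by
            rw [map_sub]
            rw [show (1 + (Ct t m).comp j) a = (1 + (Ct t m).comp j) b from hab, sub_self]
          have hu : (a - b) + Ct t m (j (a - b)) = 0 := h0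
          have hz : a - b = 0 := by
            refine hinj t m hm (a - b) (fun w => ?_)
            have h1 : 𝔞₁ t ((a - b) + Ct t m (j (a - b))) w = 0 := by rw [hu]; simp
            rw [map_add, ContinuousLinearMap.add_apply, hCt t m (hU'U hm)] at h1
            exact h1
          rw [← sub_eq_zero]
          exact hz⟩
    · intro m hm
      exact hm.1.2
    · intro m hm
      have h := ContinuousLinearMap.isUnit_iff_bijective.1 (hm.2 : IsUnit (B (t, m)))
      have heq : (fun v : V => v + Ct t m (j v)) = ⇑(B (t, m)) := rfl
      rw [heq]
      exact h
  · -- the solution map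
    refine ⟨fun q => Ring.inverse (B q.1) (invA q.1.1 q.2), ?_, ?_⟩
    · -- continuity
      intro q hq
      apply ContinuousAt.continuousWithinAt
      have hq1 : q.1 ∈ (Set.univ ×ˢ U) ∩ B ⁻¹' {A | IsUnit A} := hq.1
      have hB1 : ContinuousAt (fun q : (E × X) × (W →SL[starRingEnd 𝕂] 𝕂) => Ring.inverse (B q.1)) q := by
        have hat : ContinuousAt B q.1 := hBcont.continuousAt (hOopen.mem_nhds hq1.1)
        have hRinv : ContinuousAt Ring.inverse (B q.1) := by
          have h := NormedRing.inverse_continuousAt (hunit𝒰 q.1 hq1).unit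
          rwa [IsUnit.unit_spec] at h
        exact (hRinv.comp hat).comp continuousAt_fst
      have hB2 : ContinuousAt (fun q : (E × X) × (W →SL[starRingEnd 𝕂] 𝕂) => invA q.1.1 q.2) q := by
        have h1 : Continuous (fun q : (E × X) × (W →SL[starRingEnd 𝕂] 𝕂) => invA q.1.1) :=
          hinvA_cont.comp (continuous_fst.fst)
        exact (h1.clm_apply continuous_snd).continuousAt
      have heval : Continuous (fun z : (V →L[𝕂] V) × V => z.1 z.2) :=
        isBoundedBilinearMap_apply.continuous
      exact heval.continuousAt.comp (hB1.prodMk hB2)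
    · -- the variational identities
      intro p hp φ
      have hmemU : p.2 ∈ U := hp.1.2
      have hBu : B p (Ring.inverse (B p) (invA p.1 φ)) = invA p.1 φ := by
        calc B p (Ring.inverse (B p) (invA p.1 φ))
            = (B p * Ring.inverse (B p)) (invA p.1 φ) := rfl
        _ = invA p.1 φ := by rw [Ring.mul_inverse_cancel _ (hunit𝒰 p hp)]; rfl
      set u : V := Ring.inverse (B p) (invA p.1 φ) with hudef
      refine ⟨?_, ?_, ?_⟩
      · intro w
        have h1 : 𝔞₁ p.1 (B p u) w = φ w := by rw [hBu, hinvA_right]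
        rw [show B p u = u + Ct p.1 p.2 (j u) from rfl, map_add,
          ContinuousLinearMap.add_apply, hCt p.1 p.2 hmemU] at h1
        simpa using h1
      · intro u' hu'
        have h2 : 𝔞₁ p.1 (B p u') = φ := by
          ext w
          rw [show B p u' = u' + Ct p.1 p.2 (j u') from rfl, map_add,
            ContinuousLinearMap.add_apply, hCt p.1 p.2 hmemU]
          simpa using hu' w
        have h3 : B p u' = invA p.1 φ := by rw [← h2, hinvA_left]
        have h4 : Ring.inverse (B p) (B p u') = u' := by
          calc Ring.inverse (B p) (B p u') = (Ring.inverse (B p) * B p) u' := rfl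
          _ = u' := by rw [Ring.inverse_mul_cancel _ (hunit𝒰 p hp)]; rfl
        rw [h3] at h4
        exact h4.symm
      · calc ‖u‖ ≤ ‖Ring.inverse (B p)‖ * ‖invA p.1 φ‖ := (Ring.inverse (B p)).le_opNorm _
        _ ≤ ‖Ring.inverse (B p)‖ * ((c p.1)⁻¹ * ‖φ‖) :=
            mul_le_mul_of_nonneg_left (hinvA_norm _ _) (norm_nonneg _)
        _ = 1 / c p.1 * ‖Ring.inverse (B p)‖ * ‖φ‖ := by ring
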